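/- Let X be a Banach space and T : X → X an (a,b,α)-enriched interpolative Kannan type operator with b > 0 and λ = 1/(b+1). Then for any x_0 ∈ X, the Krasnoselskii iteration x_{n+1} = (1−λ)x_n + λ T x_n converges strongly to the unique fixed point of T. -/

import Mathlib

open Filter Topology

/-- Interpolative Kannan operators on complete normed spaces: existence,
uniqueness, and convergence of Picard iteration. -/
theorem kannan_aux
    {E : Type*} [NormedAddCommGroup E] [CompleteSpace E]
    (S : E → E) (a α : ℝ) (ha0 : 0 ≤ a) (ha1 : a < 1)
    (hα0 : 0 < α) (hα1 : α < 1)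
    (hS : ∀ x y : E, ‖S x - S y‖ ≤ a * ‖x - S x‖ ^ α * ‖y - S y‖ ^ (1 - α)) :
    ∃ z : E, S z = z ∧ (∀ y : E, S y = y → y = z) ∧
      ∀ x₀ : E, Tendsto (fun n => S^[n] x₀) atTop (𝓝 z) := by
  set q : ℝ := a ^ (1/α) with hq
  have hq0 : 0 ≤ q := Real.rpow_nonneg ha0 _
  have hq1 : q < 1 := by
    rcases eq_or_lt_of_le ha0 with h | h
    · rw [hq, ← h, Real.zero_rpow (by positivity)]; norm_num
    · exact Real.rpow_lt_one ha0 ha1 (by positivity)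
  have step : ∀ x : E, ‖S x - S (S x)‖ ≤ q * ‖x - S x‖ := by
    intro x
    have h := hS x (S x)
    rcases eq_or_lt_of_le (norm_nonneg (S x - S (S x))) with h0 | h0
    · rw [← h0]; positivity
    · have hα' : (0:ℝ) < 1 - α := by linarith
      have key : ‖S x - S (S x)‖ ^ α ≤ a * ‖x - S x‖ ^ α := by
        have h2 : ‖S x - S (S x)‖ = ‖S x - S (S x)‖ ^ α * ‖S x - S (S x)‖ ^ (1-α) := by
          rw [← Real.rpow_add h0]; simp
        have h3 : ‖S x - S (S x)‖ ^ α * ‖S x - S (S x)‖ ^ (1-α) ≤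
            (a * ‖x - S x‖ ^ α) * ‖S x - S (S x)‖ ^ (1-α) := by
          rw [← h2]; linarith
        exact le_of_mul_le_mul_right h3 (Real.rpow_pos_of_pos h0 _)
      have hne : α ≠ 0 := ne_of_gt hα0
      calc ‖S x - S (S x)‖ = (‖S x - S (S x)‖ ^ α) ^ (1/α) := by
            rw [← Real.rpow_mul (norm_nonneg _), mul_one_div, div_self hne, Real.rpow_one]
        _ ≤ (a * ‖x - S x‖ ^ α) ^ (1/α) :=
            Real.rpow_le_rpow (Real.rpow_nonneg (norm_nonneg _) _) key (by positivity)
        _ = q * ‖x - S x‖ := by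
            rw [Real.mul_rpow ha0 (Real.rpow_nonneg (norm_nonneg _) _),
              ← Real.rpow_mul (norm_nonneg _), mul_one_div, div_self hne, Real.rpow_one]
  -- for each starting point, the iteration converges to a fixed point of S
  have main : ∀ x₀ : E, ∃ z : E, S z = z ∧ Tendsto (fun n => S^[n] x₀) atTop (𝓝 z) := by
    intro x₀
    set d : ℕ → ℝ := fun n => ‖S^[n] x₀ - S^[n+1] x₀‖ with hd
    have hdrec : ∀ n, d (n+1) ≤ q * d n := by
      intro n
      have := step (S^[n] x₀)
      simpa [hd, Function.iterate_succ_apply'] using this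
    have hbound : ∀ n, d n ≤ d 0 * q ^ n := by
      intro n
      induction n with
      | zero => simp
      | succ n ih =>
        calc d (n+1) ≤ q * d n := hdrec n
          _ ≤ q * (d 0 * q ^ n) := by
              exact mul_le_mul_of_nonneg_left ih hq0
          _ = d 0 * q ^ (n+1) := by ring
    have hcauchy : CauchySeq (fun n => S^[n] x₀) := by
      apply cauchySeq_of_le_geometric q (d 0) hq1
      intro n
      rw [dist_eq_norm]
      exact hbound n
    obtain ⟨z, hz⟩ := cauchySeq_tendsto_of_complete hcauchy
    have hd0 : Tendsto d atTop (𝓝 0) := by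
      apply squeeze_zero (fun n => norm_nonneg _) hbound
      simpa using tendsto_const_nhds.mul (tendsto_pow_atTop_nhds_zero_of_lt_one hq0 hq1)
    have hdα : Tendsto (fun n => d n ^ α) atTop (𝓝 0) := by
      have hc : ContinuousAt (fun x : ℝ => x ^ α) 0 :=
        Real.continuousAt_rpow_const 0 α (Or.inr hα0.le)
      have := hc.tendsto.comp hd0
      rw [Real.zero_rpow (ne_of_gt hα0)] at this
      exact this
    have hSz : Tendsto (fun n => S^[n+1] x₀) atTop (𝓝 (S z)) := by
      rw [tendsto_iff_norm_sub_tendsto_zero]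
      apply squeeze_zero (fun n => norm_nonneg _)
        (g := fun n => a * d n ^ α * ‖z - S z‖ ^ (1 - α))
      · intro n
        have := hS (S^[n] x₀) z
        simpa [hd, Function.iterate_succ_apply'] using this
      · have : Tendsto (fun n => a * d n ^ α * ‖z - S z‖ ^ (1 - α)) atTop
            (𝓝 (a * 0 * ‖z - S z‖ ^ (1 - α))) :=
          ((tendsto_const_nhds.mul hdα).mul tendsto_const_nhds)
        simpa using this
    have hz' : Tendsto (fun n => S^[n+1] x₀) atTop (𝓝 z) :=
      hz.comp (tendsto_add_atTop_nat 1)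
    exact ⟨z, tendsto_nhds_unique hSz hz', hz⟩
  obtain ⟨z, hzfix, hzten⟩ := main 0
  have huniq : ∀ y : E, S y = y → y = z := by
    intro y hy
    have h := hS y z
    rw [hy, hzfix] at h
    have h0 : ‖y - y‖ = 0 := by simp
    have hz0 : ‖z - z‖ = 0 := by simp
    rw [h0, hz0, Real.zero_rpow (ne_of_gt hα0),
      Real.zero_rpow (by intro h'; linarith)] at h
    have : ‖y - z‖ ≤ 0 := by linarith
    have : y - z = 0 := norm_le_zero_iff.mp this
    exact sub_eq_zero.mp this
  refine ⟨z, hzfix, huniq, fun x₀ => ?_⟩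
  obtain ⟨w, hwfix, hwten⟩ := main x₀
  rwa [huniq w hwfix] at hwten

theorem krasnoselskii_converges_to_fixed_point
    {E : Type*} [NormedAddCommGroup E] [NormedSpace ℝ E] [CompleteSpace E]
    (T : E → E) (a b α : ℝ) (hb : 0 < b) (ha0 : 0 ≤ a) (ha1 : a < 1)
    (hα0 : 0 < α) (hα1 : α < 1)
    (hT : ∀ x y : E, ‖b • (x - y) + (T x - T y)‖ ≤
      a * ‖x - T x‖ ^ α * ‖y - T y‖ ^ (1 - α)) :
    ∃ xs : E, (T xs = xs ∧ ∀ y : E, T y = y → y = xs) ∧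
      ∀ x₀ : E,
        Tendsto (fun n => (fun x => (1 - (1 / (b + 1))) • x + (1 / (b + 1)) • T x)^[n] x₀)
          atTop (𝓝 xs) := by
  set l : ℝ := 1 / (b + 1) with hl
  have hb1 : (0:ℝ) < b + 1 := by linarith
  have hl0 : 0 < l := by positivity
  have hlb : 1 - l = l * b := by
    rw [hl]
    field_simp
    ring
  set S : E → E := fun x => (1 - l) • x + l • T x with hSdef
  have hsub : ∀ x : E, x - S x = l • (x - T x) := by
    intro x
    show x - ((1 - l) • x + l • T x) = l • (x - T x)
    module
  have hdiff : ∀ x y : E, S x - S y = l • (b • (x - y) + (T x - T y)) := by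
    intro x y
    show ((1 - l) • x + l • T x) - ((1 - l) • y + l • T y) = l • (b • (x - y) + (T x - T y))
    rw [hlb]
    module
  have hnorm : ∀ x : E, ‖x - S x‖ = l * ‖x - T x‖ := by
    intro x
    rw [hsub, norm_smul, Real.norm_of_nonneg hl0.le]
  have hS : ∀ x y : E, ‖S x - S y‖ ≤ a * ‖x - S x‖ ^ α * ‖y - S y‖ ^ (1 - α) := by
    intro x y
    rw [hdiff, norm_smul, Real.norm_of_nonneg hl0.le, hnorm, hnorm]
    calc l * ‖b • (x - y) + (T x - T y)‖
        ≤ l * (a * ‖x - T x‖ ^ α * ‖y - T y‖ ^ (1 - α)) :=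
          mul_le_mul_of_nonneg_left (hT x y) hl0.le
      _ = a * (l * ‖x - T x‖) ^ α * (l * ‖y - T y‖) ^ (1 - α) := by
          have hll : l ^ α * l ^ (1 - α) = l := by
            rw [← Real.rpow_add hl0]; norm_num
          rw [Real.mul_rpow hl0.le (norm_nonneg _), Real.mul_rpow hl0.le (norm_nonneg _)]
          linear_combination (-(a * ‖x - T x‖ ^ α * ‖y - T y‖ ^ (1 - α))) * hll
  obtain ⟨z, hzfix, huniq, hten⟩ := kannan_aux S a α ha0 ha1 hα0 hα1 hS
  have hfixiff : ∀ w : E, S w = w ↔ T w = w := by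
    intro w
    constructor
    · intro h
      have h1 : w - S w = 0 := by rw [h]; simp
      rw [hsub] at h1
      rcases smul_eq_zero.mp h1 with h2 | h2
      · exact absurd h2 (ne_of_gt hl0)
      · have := sub_eq_zero.mp h2
        exact this.symm
    · intro h
      show (1 - l) • w + l • T w = w
      rw [h]
      module
  refine ⟨z, ⟨(hfixiff z).mp hzfix, fun y hy => huniq y ((hfixiff y).mpr hy)⟩, hten⟩
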